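/- If F : ℝ → ℝ is a C² nonnegative function vanishing only at ±1 and satisfying F''(u) ≥ c·|u|^(p-2) whenever |u| ≥ 1 − δ₀, then there exists a constant c̄_F > 0 such that F(u) ≥ c̄_F·(|u| − 1)² for every u ∈ ℝ. -/

import Mathlib

open Set

private lemma aux_right (g : ℝ → ℝ) (hg : Differentiable ℝ g) (hg' : Differentiable ℝ (deriv g))
    (m a u : ℝ) (ha : g a = 0) (ha' : deriv g a = 0) (hu : a ≤ u)
    (hsec : ∀ x ∈ Set.Icc a u, m ≤ deriv (deriv g) x) :
    m / 2 * (u - a) ^ 2 ≤ g u := by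
  have hφd : ∀ x : ℝ, HasDerivAt (fun y => deriv g y - m * (y - a)) (deriv (deriv g) x - m) x := by
    intro x
    have h1 : HasDerivAt (fun y => m * (y - a)) m x := by
      simpa using ((hasDerivAt_id x).sub_const a).const_mul m
    exact ((hg' x).hasDerivAt).sub h1
  have hφmono : MonotoneOn (fun y => deriv g y - m * (y - a)) (Set.Icc a u) := by
    apply monotoneOn_of_deriv_nonneg (convex_Icc a u)
    · exact (hg'.continuous.sub (by fun_prop)).continuousOn
    · intro x _; exact (hφd x).differentiableAt.differentiableWithinAt
    · intro x hx
      rw [(hφd x).deriv]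
      rw [interior_Icc] at hx
      have := hsec x (Set.Ioo_subset_Icc_self hx)
      linarith
  have hφ : ∀ x ∈ Set.Icc a u, m * (x - a) ≤ deriv g x := by
    intro x hx
    have h0 := hφmono (Set.left_mem_Icc.mpr hu) hx hx.1
    simp only [sub_self, mul_zero, ha'] at h0
    linarith
  have hψd : ∀ x : ℝ, HasDerivAt (fun y => g y - m / 2 * (y - a) ^ 2)
      (deriv g x - m * (x - a)) x := by
    intro x
    have h1 : HasDerivAt (fun y => m / 2 * (y - a) ^ 2) (m * (x - a)) x := by
      have : HasDerivAt (fun y => m / 2 * (y - a) ^ 2) _ x := (((hasDerivAt_id x).sub_const a).pow 2).const_mul (m / 2)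
      convert this using 1
      simp; ring
    exact (hg x).hasDerivAt.sub h1
  have hψmono : MonotoneOn (fun y => g y - m / 2 * (y - a) ^ 2) (Set.Icc a u) := by
    apply monotoneOn_of_deriv_nonneg (convex_Icc a u)
    · exact (hg.continuous.sub (by fun_prop)).continuousOn
    · intro x _; exact (hψd x).differentiableAt.differentiableWithinAt
    · intro x hx
      rw [(hψd x).deriv]
      rw [interior_Icc] at hx
      have := hφ x (Set.Ioo_subset_Icc_self hx)
      linarith
  have h0 := hψmono (Set.left_mem_Icc.mpr hu) (Set.right_mem_Icc.mpr hu) hu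
  simp only [sub_self, ha] at h0
  nlinarith [h0]

private lemma aux_left (g : ℝ → ℝ) (hg : Differentiable ℝ g) (hg' : Differentiable ℝ (deriv g))
    (m a u : ℝ) (ha : g a = 0) (ha' : deriv g a = 0) (hu : u ≤ a)
    (hsec : ∀ x ∈ Set.Icc u a, m ≤ deriv (deriv g) x) :
    m / 2 * (u - a) ^ 2 ≤ g u := by
  have hφd : ∀ x : ℝ, HasDerivAt (fun y => deriv g y - m * (y - a)) (deriv (deriv g) x - m) x := by
    intro x
    have h1 : HasDerivAt (fun y => m * (y - a)) m x := by
      simpa using ((hasDerivAt_id x).sub_const a).const_mul m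
    exact ((hg' x).hasDerivAt).sub h1
  have hφmono : MonotoneOn (fun y => deriv g y - m * (y - a)) (Set.Icc u a) := by
    apply monotoneOn_of_deriv_nonneg (convex_Icc u a)
    · exact (hg'.continuous.sub (by fun_prop)).continuousOn
    · intro x _; exact (hφd x).differentiableAt.differentiableWithinAt
    · intro x hx
      rw [(hφd x).deriv]
      rw [interior_Icc] at hx
      have := hsec x (Set.Ioo_subset_Icc_self hx)
      linarith
  have hφ : ∀ x ∈ Set.Icc u a, deriv g x ≤ m * (x - a) := by
    intro x hx
    have h0 := hφmono hx (Set.right_mem_Icc.mpr hu) hx.2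
    simp only [sub_self, mul_zero, ha'] at h0
    linarith
  have hψd : ∀ x : ℝ, HasDerivAt (fun y => g y - m / 2 * (y - a) ^ 2)
      (deriv g x - m * (x - a)) x := by
    intro x
    have h1 : HasDerivAt (fun y => m / 2 * (y - a) ^ 2) (m * (x - a)) x := by
      have : HasDerivAt (fun y => m / 2 * (y - a) ^ 2) _ x := (((hasDerivAt_id x).sub_const a).pow 2).const_mul (m / 2)
      convert this using 1
      simp; ring
    exact (hg x).hasDerivAt.sub h1
  have hψmono : AntitoneOn (fun y => g y - m / 2 * (y - a) ^ 2) (Set.Icc u a) := by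
    apply antitoneOn_of_deriv_nonpos (convex_Icc u a)
    · exact (hg.continuous.sub (by fun_prop)).continuousOn
    · intro x _; exact (hψd x).differentiableAt.differentiableWithinAt
    · intro x hx
      rw [(hψd x).deriv]
      rw [interior_Icc] at hx
      have := hφ x (Set.Ioo_subset_Icc_self hx)
      linarith
  have h0 := hψmono (Set.left_mem_Icc.mpr hu) (Set.right_mem_Icc.mpr hu) hu
  simp only [sub_self, ha] at h0
  nlinarith [h0]

theorem stmt_1 (F : ℝ → ℝ) (hF : ContDiff ℝ 2 F) (hFnn : ∀ u, 0 ≤ F u)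
    (hFzero : ∀ u, F u = 0 ↔ u = 1 ∨ u = -1)
    (δ₀ c p : ℝ) (hδ₀ : δ₀ ∈ Set.Ioo (0:ℝ) 1) (hc : 0 < c) (hp : 3 ≤ p) (hp' : p < 6)
    (hF'' : ∀ u : ℝ, 1 - δ₀ ≤ |u| → c * |u| ^ (p - 2) ≤ iteratedDeriv 2 F u) :
    ∃ cbarF > (0:ℝ), ∀ u : ℝ, cbarF * (|u| - 1) ^ 2 ≤ F u := by
  obtain ⟨hδ1, hδ2⟩ := hδ₀
  set l : ℝ := 1 - δ₀ with hl
  have hl0 : 0 < l := by simp [hl]; linarith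
  have hl1 : l < 1 := by simp [hl]; linarith
  -- differentiability
  have hFd : Differentiable ℝ F := hF.differentiable (by norm_num)
  have hFd' : Differentiable ℝ (deriv F) := by
    have h2 : ContDiff ℝ ((1 : ℕ) + 1) F := by
      have : ((2 : ℕ) : WithTop ℕ∞) = (1 : ℕ) + 1 := by norm_num
      rw [← this]; exact_mod_cast hF
    exact (contDiff_succ_iff_deriv.mp h2).2.2.differentiable (by norm_num)
  -- second derivative lower bound
  set m : ℝ := c * l ^ (p - 2) with hm
  have hm0 : 0 < m := mul_pos hc (Real.rpow_pos_of_pos hl0 _)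
  have hsec : ∀ x : ℝ, l ≤ |x| → m ≤ deriv (deriv F) x := by
    intro x hx
    have h1 := hF'' x hx
    have h2 : iteratedDeriv 2 F x = deriv (deriv F) x := by
      rw [show (2:ℕ) = 1 + 1 from rfl, iteratedDeriv_succ, iteratedDeriv_one]
    have h3 : l ^ (p - 2) ≤ |x| ^ (p - 2) :=
      Real.rpow_le_rpow hl0.le hx (by linarith)
    rw [h2] at h1
    calc m ≤ c * |x| ^ (p - 2) := by
            exact mul_le_mul_of_nonneg_left h3 hc.le
      _ ≤ _ := h1
  -- values and derivatives at ±1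
  have hF1 : F 1 = 0 := (hFzero 1).mpr (Or.inl rfl)
  have hFm1 : F (-1) = 0 := (hFzero (-1)).mpr (Or.inr rfl)
  have hd1 : deriv F 1 = 0 := by
    have : IsLocalMin F 1 :=
      Filter.Eventually.of_forall (fun x => by rw [hF1]; exact hFnn x)
    exact this.deriv_eq_zero
  have hdm1 : deriv F (-1) = 0 := by
    have : IsLocalMin F (-1) :=
      Filter.Eventually.of_forall (fun x => by rw [hFm1]; exact hFnn x)
    exact this.deriv_eq_zero
  -- minimum on the compact middle part
  obtain ⟨x₀, hx₀K, hx₀min⟩ := isCompact_Icc.exists_isMinOn (s := Set.Icc (-l) l)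
    ⟨0, by constructor <;> linarith⟩ hF.continuous.continuousOn
  have hμ : 0 < F x₀ := by
    rcases (hFnn x₀).lt_or_eq with h | h
    · exact h
    · exfalso
      rcases (hFzero x₀).mp h.symm with h1 | h1 <;>
        · rw [h1] at hx₀K; obtain ⟨ha, hb⟩ := hx₀K; linarith
  refine ⟨min (m / 2) (F x₀), lt_min (by linarith) hμ, fun u => ?_⟩
  rcases le_or_gt |u| l with hcase | hcase
  · -- middle region
    have h1 : (|u| - 1) ^ 2 ≤ 1 := by nlinarith [abs_nonneg u]
    have h2 : F x₀ ≤ F u := hx₀min (abs_le.mp hcase)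
    have h3 : min (m / 2) (F x₀) * (|u| - 1) ^ 2 ≤ min (m / 2) (F x₀) * 1 :=
      mul_le_mul_of_nonneg_left h1 (le_of_lt (lt_min (by linarith) hμ))
    calc min (m / 2) (F x₀) * (|u| - 1) ^ 2 ≤ min (m / 2) (F x₀) := by linarith
      _ ≤ F x₀ := min_le_right _ _
      _ ≤ F u := h2
  · have hmin : min (m / 2) (F x₀) ≤ m / 2 := min_le_left _ _
    have hsq : (0:ℝ) ≤ (|u| - 1) ^ 2 := sq_nonneg _
    rcases le_or_gt 0 u with hu0 | hu0
    · have habs : |u| = u := abs_of_nonneg hu0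
      rw [habs] at hcase ⊢
      have key : m / 2 * (u - 1) ^ 2 ≤ F u := by
        rcases le_or_gt 1 u with h1 | h1
        · exact aux_right F hFd hFd' m 1 u hF1 hd1 h1
            (fun x hx => hsec x (by rw [abs_of_nonneg (by linarith [hx.1])]; linarith [hx.1, hl1]))
        · exact aux_left F hFd hFd' m 1 u hF1 hd1 h1.le
            (fun x hx => hsec x (by rw [abs_of_nonneg (by linarith [hx.1])]; linarith [hx.1]))
      calc min (m / 2) (F x₀) * (u - 1) ^ 2 ≤ m / 2 * (u - 1) ^ 2 :=
            mul_le_mul_of_nonneg_right hmin (sq_nonneg _)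
        _ ≤ F u := key
    · have habs : |u| = -u := abs_of_neg hu0
      rw [habs] at hcase ⊢
      have hsq' : (-u - 1) ^ 2 = (u - (-1)) ^ 2 := by ring
      have key : m / 2 * (u - (-1)) ^ 2 ≤ F u := by
        rcases le_or_gt u (-1) with h1 | h1
        · exact aux_left F hFd hFd' m (-1) u hFm1 hdm1 h1
            (fun x hx => hsec x (by rw [abs_of_nonpos (by linarith [hx.2])]; linarith [hx.2, hl1]))
        · exact aux_right F hFd hFd' m (-1) u hFm1 hdm1 h1.le
            (fun x hx => hsec x (by rw [abs_of_nonpos (by nlinarith [hx.2])]; linarith [hx.2]))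
      rw [hsq']
      calc min (m / 2) (F x₀) * (u - (-1)) ^ 2 ≤ m / 2 * (u - (-1)) ^ 2 :=
            mul_le_mul_of_nonneg_right hmin (sq_nonneg _)
        _ ≤ F u := key
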